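/- Suppose π^M is a least favorable prior for the prior disclosure game with Bayes rule δ^M, and a Bayesimax prior exists. Then every Bayesimax prior π* is least favorable, and the constant rule δ*(x) ≡ π* is minimax: sup_θ ℛ_S(δ*, θ) = inf_δ sup_θ ℛ_S(δ, θ). -/
import Mathlib


open Finset

/-- `p` is a probability mass function on the finite set `Ω`. -/
def IsPMF {Ω : Type*} [Fintype Ω] (p : Ω → ℝ) : Prop :=
  (∀ a, 0 ≤ p a) ∧ ∑ a, p a = 1

/-- A scoring rule `S` on pmfs over `Ω` is strictly proper. -/
def StrictlyProper {Ω : Type*} [Fintype Ω] (S : (Ω → ℝ) → Ω → ℝ) : Prop :=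
  ∀ p q : Ω → ℝ, IsPMF p → IsPMF q →
    (∑ y, p y * S q y ≤ ∑ y, p y * S p y) ∧
    ((∑ y, p y * S q y = ∑ y, p y * S p y) → q = p)

/-- Prior predictive (marginal) distribution of the data. -/
noncomputable def priorPred {Ω 𝒳 : Type*} [Fintype Ω]
    (P : Ω → 𝒳 → ℝ) (π : Ω → ℝ) (x : 𝒳) : ℝ :=
  ∑ θ, π θ * P θ x

/-- Posterior distribution over `Ω` given `X = x`, under prior `a`. -/
noncomputable def post {Ω 𝒳 : Type*} [Fintype Ω]
    (P : Ω → 𝒳 → ℝ) (a : Ω → ℝ) (x : 𝒳) (θ : Ω) : ℝ :=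
  a θ * P θ x / priorPred P a x

/-- Frequentist risk of decision rule `δ` at `θ` in the prior disclosure game. -/
noncomputable def freqRisk {Ω 𝒳 : Type*} [Fintype Ω] [Fintype 𝒳]
    (S : (Ω → ℝ) → Ω → ℝ) (P : Ω → 𝒳 → ℝ) (δ : 𝒳 → Ω → ℝ) (θ : Ω) : ℝ :=
  ∑ x, P θ x * (-(S (post P (δ x) x) θ))

/-- Bayes risk of decision rule `δ` under prior `π` in the prior disclosure game. -/
noncomputable def bayesRisk {Ω 𝒳 : Type*} [Fintype Ω] [Fintype 𝒳]
    (S : (Ω → ℝ) → Ω → ℝ) (P : Ω → 𝒳 → ℝ) (δ : 𝒳 → Ω → ℝ) (π : Ω → ℝ) : ℝ :=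
  ∑ θ, π θ * freqRisk S P δ θ

/-- Minimum Bayes risk over all (pmf-valued) decision rules. -/
noncomputable def minBayesRisk {Ω 𝒳 : Type*} [Fintype Ω] [Fintype 𝒳]
    (S : (Ω → ℝ) → Ω → ℝ) (P : Ω → 𝒳 → ℝ) (π : Ω → ℝ) : ℝ :=
  sInf {r | ∃ δ : 𝒳 → Ω → ℝ, (∀ x, IsPMF (δ x)) ∧ r = bayesRisk S P δ π}

/-- Generalized entropy associated with the scoring rule `S`. -/
noncomputable def genEntropy {Ω : Type*} [Fintype Ω]
    (S : (Ω → ℝ) → Ω → ℝ) (p : Ω → ℝ) : ℝ :=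
  -∑ y, p y * S p y

/-- Score divergence associated with the scoring rule `S`. -/
noncomputable def scoreDiv {Ω : Type*} [Fintype Ω]
    (S : (Ω → ℝ) → Ω → ℝ) (p q : Ω → ℝ) : ℝ :=
  ∑ y, p y * (S p y - S q y)

section Aux
variable {Ω 𝒳 : Type*} [Fintype Ω] [Fintype 𝒳]

lemma exists_pos_of_pmf {π : Ω → ℝ} (hπ : IsPMF π) : ∃ θ, 0 < π θ := by
  by_contra h
  push_neg at h
  have hz : ∑ a, π a = 0 := Finset.sum_eq_zero fun a _ => le_antisymm (h a) (hπ.1 a)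
  rw [hπ.2] at hz; norm_num at hz

lemma priorPred_pos (P : Ω → 𝒳 → ℝ) (hPpos : ∀ θ x, 0 < P θ x)
    {π : Ω → ℝ} (hπ : IsPMF π) (x : 𝒳) : 0 < priorPred P π x := by
  obtain ⟨θ0, h0⟩ := exists_pos_of_pmf hπ
  exact Finset.sum_pos' (fun θ _ => mul_nonneg (hπ.1 θ) (hPpos θ x).le)
    ⟨θ0, Finset.mem_univ _, mul_pos h0 (hPpos θ0 x)⟩

lemma post_pmf (P : Ω → 𝒳 → ℝ) (hPpos : ∀ θ x, 0 < P θ x)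
    {π : Ω → ℝ} (hπ : IsPMF π) (x : 𝒳) : IsPMF (post P π x) := by
  have hm := priorPred_pos P hPpos hπ x
  refine ⟨fun θ => div_nonneg (mul_nonneg (hπ.1 θ) (hPpos θ x).le) hm.le, ?_⟩
  unfold post
  rw [← Finset.sum_div]
  exact div_self hm.ne'

lemma weight_eq (P : Ω → 𝒳 → ℝ) (hPpos : ∀ θ x, 0 < P θ x)
    {π : Ω → ℝ} (hπ : IsPMF π) (x : 𝒳) (θ : Ω) :
    π θ * P θ x = priorPred P π x * post P π x θ := by
  have hm := (priorPred_pos P hPpos hπ x).ne'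
  rw [post, mul_comm (priorPred P π x), div_mul_cancel₀ _ hm]

lemma score_sum_eq (S : (Ω → ℝ) → Ω → ℝ) (P : Ω → 𝒳 → ℝ) (hPpos : ∀ θ x, 0 < P θ x)
    {π : Ω → ℝ} (hπ : IsPMF π) (x : 𝒳) (q : Ω → ℝ) :
    ∑ θ, π θ * P θ x * S q θ = priorPred P π x * ∑ θ, post P π x θ * S q θ := by
  rw [Finset.mul_sum]
  refine Finset.sum_congr rfl fun θ _ => ?_
  rw [weight_eq P hPpos hπ x θ]; ring

lemma bayesRisk_eq_neg (S : (Ω → ℝ) → Ω → ℝ) (P : Ω → 𝒳 → ℝ) (δ : 𝒳 → Ω → ℝ) (π : Ω → ℝ) :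
    bayesRisk S P δ π = -∑ x, ∑ θ, π θ * P θ x * S (post P (δ x) x) θ := by
  simp only [bayesRisk, freqRisk, Finset.mul_sum]
  rw [Finset.sum_comm, ← Finset.sum_neg_distrib]
  refine Finset.sum_congr rfl fun x _ => ?_
  rw [← Finset.sum_neg_distrib]
  exact Finset.sum_congr rfl fun θ _ => by ring

lemma bayes_ge (S : (Ω → ℝ) → Ω → ℝ) (hS : StrictlyProper S)
    (P : Ω → 𝒳 → ℝ) (hPpos : ∀ θ x, 0 < P θ x) {π : Ω → ℝ} (hπ : IsPMF π)
    {δ : 𝒳 → Ω → ℝ} (hδ : ∀ x, IsPMF (δ x)) :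
    bayesRisk S P (fun _ => π) π ≤ bayesRisk S P δ π ∧
    (bayesRisk S P δ π = bayesRisk S P (fun _ => π) π →
      ∀ x, post P (δ x) x = post P π x) := by
  have hterm : ∀ x, ∑ θ, π θ * P θ x * S (post P (δ x) x) θ ≤
      ∑ θ, π θ * P θ x * S (post P π x) θ := by
    intro x
    rw [score_sum_eq S P hPpos hπ x, score_sum_eq S P hPpos hπ x]
    exact mul_le_mul_of_nonneg_left
      ((hS _ _ (post_pmf P hPpos hπ x) (post_pmf P hPpos (hδ x) x)).1)
      (priorPred_pos P hPpos hπ x).le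
  constructor
  · rw [bayesRisk_eq_neg, bayesRisk_eq_neg]
    exact neg_le_neg (Finset.sum_le_sum fun x _ => hterm x)
  · intro heq x
    rw [bayesRisk_eq_neg, bayesRisk_eq_neg, neg_inj] at heq
    have hx := (Finset.sum_eq_sum_iff_of_le (fun x _ => hterm x)).1 heq x (Finset.mem_univ x)
    rw [score_sum_eq S P hPpos hπ x, score_sum_eq S P hPpos hπ x] at hx
    have hx' := mul_left_cancel₀ (priorPred_pos P hPpos hπ x).ne' hx
    exact (hS _ _ (post_pmf P hPpos hπ x) (post_pmf P hPpos (hδ x) x)).2 hx'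

lemma minBayes_eq (S : (Ω → ℝ) → Ω → ℝ) (hS : StrictlyProper S)
    (P : Ω → 𝒳 → ℝ) (hPpos : ∀ θ x, 0 < P θ x) {π : Ω → ℝ} (hπ : IsPMF π) :
    minBayesRisk S P π = bayesRisk S P (fun _ => π) π := by
  have hmem : bayesRisk S P (fun _ => π) π ∈
      {r | ∃ δ : 𝒳 → Ω → ℝ, (∀ x, IsPMF (δ x)) ∧ r = bayesRisk S P δ π} :=
    ⟨fun _ => π, fun _ => hπ, rfl⟩
  have hlb : ∀ r ∈ {r | ∃ δ : 𝒳 → Ω → ℝ, (∀ x, IsPMF (δ x)) ∧ r = bayesRisk S P δ π},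
      bayesRisk S P (fun _ => π) π ≤ r := by
    rintro r ⟨δ, hδ, rfl⟩
    exact (bayes_ge S hS P hPpos hπ hδ).1
  exact le_antisymm (csInf_le ⟨_, hlb⟩ hmem) (le_csInf ⟨_, hmem⟩ hlb)

lemma bayesRisk_mix (S : (Ω → ℝ) → Ω → ℝ) (P : Ω → 𝒳 → ℝ) (δ : 𝒳 → Ω → ℝ) (a b : Ω → ℝ) :
    bayesRisk S P δ (fun θ => (a θ + b θ) / 2)
      = (bayesRisk S P δ a + bayesRisk S P δ b) / 2 := by
  unfold bayesRisk
  rw [← Finset.sum_add_distrib, Finset.sum_div]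
  exact Finset.sum_congr rfl fun θ _ => by ring

lemma freqRisk_congr (S : (Ω → ℝ) → Ω → ℝ) (P : Ω → 𝒳 → ℝ) {δ δ' : 𝒳 → Ω → ℝ}
    (h : ∀ x, post P (δ x) x = post P (δ' x) x) (θ : Ω) :
    freqRisk S P δ θ = freqRisk S P δ' θ :=
  Finset.sum_congr rfl fun x _ => by rw [h x]

end Aux

/-- If `π^M` is least favorable for the prior disclosure game (with Bayes rule
`δ^M`) and a Bayesimax prior exists, then every Bayesimax prior `π*` is least favorable, and
the constant rule `δ*(x) ≡ π*` is minimax: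
`sup_θ ℛ_S(δ*, θ) = inf_δ sup_θ ℛ_S(δ, θ)`. -/
theorem bayesimax_is_least_favorable_and_minimax
    {Ω 𝒳 : Type*} [Fintype Ω] [Fintype 𝒳] [Nonempty Ω]
    (S : (Ω → ℝ) → Ω → ℝ) (hS : StrictlyProper S)
    (P : Ω → 𝒳 → ℝ) (hP : ∀ θ, IsPMF (P θ)) (hPpos : ∀ θ x, 0 < P θ x)
    (πM : Ω → ℝ) (hπM : IsPMF πM)
    (δM : 𝒳 → Ω → ℝ) (hδM : ∀ x, IsPMF (δM x))
    (hBayes : bayesRisk S P δM πM = minBayesRisk S P πM)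
    (hLF : ∀ θ, freqRisk S P δM θ ≤ minBayesRisk S P πM)
    (πstar : Ω → ℝ) (hπstar : IsPMF πstar)
    (hmax : ∀ π : Ω → ℝ, IsPMF π → minBayesRisk S P π ≤ minBayesRisk S P πstar) :
    (∀ θ, freqRisk S P (fun _ => πstar) θ ≤ minBayesRisk S P πstar) ∧
      (⨆ θ, freqRisk S P (fun _ => πstar) θ)
        = sInf {v | ∃ δ : 𝒳 → Ω → ℝ, (∀ x, IsPMF (δ x)) ∧
            v = ⨆ θ, freqRisk S P δ θ} := by
  have hMeq := minBayes_eq S hS P hPpos hπM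
  have hSeq := minBayes_eq S hS P hPpos hπstar
  -- minBayesRisk πstar = minBayesRisk πM
  have h1 : minBayesRisk S P πstar ≤ bayesRisk S P δM πstar := by
    rw [hSeq]; exact (bayes_ge S hS P hPpos hπstar hδM).1
  have h2 : bayesRisk S P δM πstar ≤ minBayesRisk S P πM := by
    unfold bayesRisk
    calc ∑ θ, πstar θ * freqRisk S P δM θ
        ≤ ∑ θ, πstar θ * minBayesRisk S P πM :=
          Finset.sum_le_sum fun θ _ => mul_le_mul_of_nonneg_left (hLF θ) (hπstar.1 θ)
      _ = minBayesRisk S P πM := by rw [← Finset.sum_mul, hπstar.2, one_mul]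
  have hrMS : minBayesRisk S P πM = minBayesRisk S P πstar :=
    le_antisymm (hmax πM hπM) (h1.trans h2)
  -- δM has the same posteriors as the constant rule πM
  have hδMpost : ∀ x, post P (δM x) x = post P πM x :=
    (bayes_ge S hS P hPpos hπM hδM).2 (hBayes.trans hMeq)
  -- mixture prior
  set π' : Ω → ℝ := fun θ => (πM θ + πstar θ) / 2 with hπ'def
  have hπ' : IsPMF π' := by
    constructor
    · intro θ; have := hπM.1 θ; have := hπstar.1 θ
      simp only [hπ'def]; linarith
    · simp only [hπ'def]
      rw [← Finset.sum_div, Finset.sum_add_distrib, hπM.2, hπstar.2]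
      norm_num
  have hmixA := bayes_ge S hS P hPpos hπM (fun _ : 𝒳 => hπ')
  have hmixB := bayes_ge S hS P hPpos hπstar (fun _ : 𝒳 => hπ')
  have hr' : bayesRisk S P (fun _ => π') π' ≤ minBayesRisk S P πstar := by
    rw [← minBayes_eq S hS P hPpos hπ']; exact hmax π' hπ'
  have hlin : bayesRisk S P (fun _ => π') π'
      = (bayesRisk S P (fun _ => π') πM + bayesRisk S P (fun _ => π') πstar) / 2 :=
    bayesRisk_mix S P (fun _ => π') πM πstar
  have hA : bayesRisk S P (fun _ => π') πM = bayesRisk S P (fun _ => πM) πM := by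
    linarith [hmixA.1, hmixB.1, hlin, hr', hMeq, hSeq, hrMS]
  have hB : bayesRisk S P (fun _ => π') πstar = bayesRisk S P (fun _ => πstar) πstar := by
    linarith [hmixA.1, hmixB.1, hlin, hr', hMeq, hSeq, hrMS]
  have hpostA : ∀ x, post P π' x = post P πM x := hmixA.2 hA
  have hpostB : ∀ x, post P π' x = post P πstar x := hmixB.2 hB
  have hpostMS : ∀ x, post P ((fun _ : 𝒳 => πstar) x) x = post P (δM x) x := fun x => by
    simp only
    rw [hδMpost x, ← hpostA x, hpostB x]
  have hfreq : ∀ θ, freqRisk S P (fun _ => πstar) θ = freqRisk S P δM θ :=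
    fun θ => freqRisk_congr S P hpostMS θ
  have part1 : ∀ θ, freqRisk S P (fun _ => πstar) θ ≤ minBayesRisk S P πstar := by
    intro θ
    rw [hfreq θ, ← hrMS]
    exact hLF θ
  refine ⟨part1, ?_⟩
  have hmemV : (⨆ θ, freqRisk S P (fun _ => πstar) θ)
      ∈ {v | ∃ δ : 𝒳 → Ω → ℝ, (∀ x, IsPMF (δ x)) ∧ v = ⨆ θ, freqRisk S P δ θ} :=
    ⟨fun _ => πstar, fun _ => hπstar, rfl⟩
  have hub : ∀ δ : 𝒳 → Ω → ℝ, BddAbove (Set.range fun θ => freqRisk S P δ θ) :=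
    fun δ => (Set.finite_range _).bddAbove
  have hlbV : ∀ v ∈ {v | ∃ δ : 𝒳 → Ω → ℝ, (∀ x, IsPMF (δ x)) ∧ v = ⨆ θ, freqRisk S P δ θ},
      minBayesRisk S P πstar ≤ v := by
    rintro v ⟨δ, hδ, rfl⟩
    have h3 : minBayesRisk S P πstar ≤ bayesRisk S P δ πstar := by
      rw [hSeq]; exact (bayes_ge S hS P hPpos hπstar hδ).1
    have h4 : bayesRisk S P δ πstar ≤ ⨆ θ, freqRisk S P δ θ := by
      unfold bayesRisk
      calc ∑ θ, πstar θ * freqRisk S P δ θ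
          ≤ ∑ θ, πstar θ * ⨆ θ', freqRisk S P δ θ' :=
            Finset.sum_le_sum fun θ _ =>
              mul_le_mul_of_nonneg_left (le_ciSup (hub δ) θ) (hπstar.1 θ)
        _ = ⨆ θ', freqRisk S P δ θ' := by rw [← Finset.sum_mul, hπstar.2, one_mul]
    exact h3.trans h4
  have hsuple : (⨆ θ, freqRisk S P (fun _ => πstar) θ) ≤ minBayesRisk S P πstar :=
    ciSup_le part1
  exact le_antisymm
    (le_csInf ⟨_, hmemV⟩ fun v hv => hsuple.trans (hlbV v hv))
    (csInf_le ⟨_, hlbV⟩ hmemV)
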